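/- arXiv:1402.4707 — 2 statements merged into one kernel-verified Lean document; each statement's English description precedes it below -/
import Mathlib

section
/- Let σ be a stable witness prestructure and S ⊆ A(σ). Then C(st_S(σ)) = C(st_S(C(σ))), i.e., the canonical form of the stabilization of σ equals the canonical form of the stabilization of the canonical form of σ. -/
open Finset

/-- A combinatorial table `((W 0, G 0), …, (W t, G t))` of pairs of finite sets,
normalized so that columns beyond `t` are empty. -/
structure WComb where
  t : ℕ
  W : ℕ → Finset ℕ
  G : ℕ → Finset ℕ
  W_beyond : ∀ i, t < i → W i = ∅
  G_beyond : ∀ i, t < i → G i = ∅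

namespace WComb

/-- Conditions (P1)-(P3) of a witness prestructure. -/
def IsPre (σ : WComb) : Prop :=
  (∀ i, 1 ≤ i → i ≤ σ.t → σ.W i ⊆ σ.W 0 ∧ σ.G i ⊆ σ.W 0) ∧
  (∀ i j, i < j → j ≤ σ.t → Disjoint (σ.G i) (σ.G j)) ∧
  (∀ i j, i ≤ j → j ≤ σ.t → Disjoint (σ.G i) (σ.W j))

/-- A stable witness prestructure: condition (S). -/
def IsStable (σ : WComb) : Prop := σ.IsPre ∧ (1 ≤ σ.t → σ.W σ.t ≠ ∅)

/-- A witness structure: condition (W). -/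
def IsWitness (σ : WComb) : Prop := σ.IsPre ∧ ∀ i, 1 ≤ i → i ≤ σ.t → σ.W i ≠ ∅

/-- The support `W 0 ∪ G 0`. -/
def supp (σ : WComb) : Finset ℕ := σ.W 0 ∪ σ.G 0

/-- The ghost set `G 0 ∪ … ∪ G t`. -/
def ghost (σ : WComb) : Finset ℕ := (Finset.range (σ.t + 1)).biUnion σ.G

/-- The active set. -/
def active (σ : WComb) : Finset ℕ := σ.supp \ σ.ghost

/-- The dimension `|A(σ)| - 1`. -/
def dim (σ : WComb) : ℤ := (σ.active.card : ℤ) - 1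

/-- The increasing list `i₁ < … < i_q` of indices `1 ≤ i ≤ t` with `W i ≠ ∅`. -/
def nzList (σ : WComb) : List ℕ :=
  ((Finset.Icc 1 σ.t).filter (fun i => σ.W i ≠ ∅)).sort (· ≤ ·)

/-- `q`, the number of nonempty columns among `W 1, …, W t`. -/
def q (σ : WComb) : ℕ := σ.nzList.length

/-- `i_k`, with `i_0 = 0`. -/
def cIdx (σ : WComb) (k : ℕ) : ℕ := if k = 0 then 0 else σ.nzList.getD (k - 1) 0

/-- The canonical form `C(σ)`. -/
def canon (σ : WComb) : WComb where
  t := σ.q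
  W := fun k => if k ≤ σ.q then σ.W (σ.cIdx k) else ∅
  G := fun k =>
    if k = 0 then σ.G 0
    else if k ≤ σ.q then (Finset.Ioc (σ.cIdx (k - 1)) (σ.cIdx k)).biUnion σ.G else ∅
  W_beyond := fun i hi => if_neg (Nat.not_le.mpr hi)
  G_beyond := fun i hi => by
    have h0 : i ≠ 0 := by omega
    simp [h0, Nat.not_le.mpr hi]

/-- The truncation index `q = max {0 ≤ i ≤ t | W i ∪ G i ⊄ S ∪ G(σ)}` of stabilization. -/
def stQ (σ : WComb) (S : Finset ℕ) : ℕ :=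
  ((Finset.range (σ.t + 1)).filter (fun i => ¬ (σ.W i ∪ σ.G i ⊆ S ∪ σ.ghost))).sup id

/-- The sets `J i = (W i \ (W (i+1) ∪ … ∪ W q)) ∩ (S ∪ G(σ))`. -/
def Jset (σ : WComb) (S : Finset ℕ) (i : ℕ) : Finset ℕ :=
  (σ.W i \ (Finset.Ioc i (σ.stQ S)).biUnion σ.W) ∩ (S ∪ σ.ghost)

/-- The stabilization `st_S(σ)` in its table form. -/
def st (σ : WComb) (S : Finset ℕ) : WComb where
  t := σ.stQ S
  W := fun k => if k ≤ σ.stQ S then σ.W k \ σ.Jset S k else ∅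
  G := fun k => if k ≤ σ.stQ S then σ.G k ∪ σ.Jset S k else ∅
  W_beyond := fun i hi => if_neg (Nat.not_le.mpr hi)
  G_beyond := fun i hi => if_neg (Nat.not_le.mpr hi)

/-- The ghosting operation `Γ_S(σ) = C(st_S(σ))`. -/
def ghosting (σ : WComb) (S : Finset ℕ) : WComb := (σ.st S).canon

/-- The trace cardinality `M(p, σ) = |{0 ≤ i ≤ t | p ∈ W i ∪ G i}|`. -/
def Mcard (σ : WComb) (p : ℕ) : ℕ :=
  ((Finset.range (σ.t + 1)).filter (fun i => p ∈ σ.W i ∪ σ.G i)).card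

/-- The set of vertices of the simplex indexed by `σ`:
the witness structures `Γ_{A(σ) \ {a}}(σ)`, `a ∈ A(σ)`. -/
def vertexSet (σ : WComb) : Set WComb :=
  {v | ∃ a ∈ σ.active, v = σ.ghosting (σ.active \ {a})}

end WComb

/-- A round counter: a function `ℤ₊ → ℤ₊ ∪ {⊥}` with finite support. -/
structure RC where
  r : ℕ → Option ℕ
  fin : {i | r i ≠ none}.Finite

namespace RC

/-- The support set of a round counter. -/
noncomputable def supp (r : RC) : Finset ℕ := r.fin.toFinset

/-- The value of a round counter at a point of its support. -/
def val (r : RC) (i : ℕ) : ℕ := (r.r i).getD 0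

/-- The active set of a round counter. -/
noncomputable def act (r : RC) : Finset ℕ := r.supp.filter (fun i => 1 ≤ r.val i)

/-- The execution `r̄ ↓ S` of a set `S`. -/
noncomputable def down (r : RC) (S : Finset ℕ) : RC where
  r := fun i => if i ∈ S then (r.r i).map (· - 1) else r.r i
  fin := r.fin.subset (by
    intro i hi
    simp only [Set.mem_setOf_eq] at hi ⊢
    intro h
    apply hi
    simp [h])

/-- The deletion `r̄ \ A` of a set `A`. -/
def del (r : RC) (A : Finset ℕ) : RC where
  r := fun i => if i ∈ A then none else r.r i
  fin := r.fin.subset (by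
    intro i hi
    simp only [Set.mem_setOf_eq] at hi ⊢
    intro h
    apply hi
    simp [h])

/-- `r̄_{S,A} = (r̄ ↓ S) \ A`. -/
noncomputable def exec (r : RC) (S A : Finset ℕ) : RC := (r.down S).del A

end RC

/-- `σ` indexes a simplex of the immediate snapshot complex `P(r̄)`. -/
def IsSimplex (r : RC) (σ : WComb) : Prop :=
  σ.IsWitness ∧ σ.supp = r.supp ∧
  (∀ p ∈ σ.active, σ.Mcard p = r.val p + 1) ∧
  (∀ p ∈ σ.ghost, σ.Mcard p ≤ r.val p + 1)

/-- The stratum `Z_S` of `P(r̄)`: simplices with `S ⊆ G 1`. -/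
def Zset (r : RC) (S : Finset ℕ) : Set WComb :=
  {σ | IsSimplex r σ ∧ S ⊆ σ.G 1}

/-- The stratum `Y_{S,A}` of `P(r̄)`: simplices with `W 1 ∪ G 1 = S` and `A ⊆ G 1`. -/
def Yset (r : RC) (S A : Finset ℕ) : Set WComb :=
  {σ | IsSimplex r σ ∧ σ.W 1 ∪ σ.G 1 = S ∧ A ⊆ σ.G 1}

/-- The stratum `X_{S,A} = Y_{S,A} ∪ Z_S`. -/
def Xset (r : RC) (S A : Finset ℕ) : Set WComb := Yset r S A ∪ Zset r S

namespace WComb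

lemma ext' {σ₁ σ₂ : WComb} (ht : σ₁.t = σ₂.t) (hW : σ₁.W = σ₂.W) (hG : σ₁.G = σ₂.G) :
    σ₁ = σ₂ := by
  cases σ₁; cases σ₂
  cases ht; cases hW; cases hG; rfl

lemma mem_nzList {σ : WComb} {i : ℕ} :
    i ∈ σ.nzList ↔ (1 ≤ i ∧ i ≤ σ.t ∧ σ.W i ≠ ∅) := by
  simp [nzList, Finset.mem_sort, Finset.mem_filter, Finset.mem_Icc, and_assoc]

lemma nzList_sorted (σ : WComb) : σ.nzList.Pairwise (· < ·) :=
  (Finset.sortedLT_sort _).pairwise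

@[simp] lemma cIdx_zero (σ : WComb) : σ.cIdx 0 = 0 := rfl

lemma cIdx_mem (σ : WComb) {k : ℕ} (h1 : 1 ≤ k) (h2 : k ≤ σ.q) :
    σ.cIdx k ∈ σ.nzList := by
  have hlt : k - 1 < σ.nzList.length := by
    have : σ.q = σ.nzList.length := rfl
    omega
  rw [cIdx, if_neg (by omega), List.getD_eq_getElem _ _ hlt]
  exact List.getElem_mem hlt

lemma cIdx_le_t (σ : WComb) (k : ℕ) : σ.cIdx k ≤ σ.t := by
  rcases Nat.eq_zero_or_pos k with hk | hk
  · simp [hk]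
  by_cases h2 : k ≤ σ.q
  · exact (mem_nzList.mp (σ.cIdx_mem hk h2)).2.1
  · rw [cIdx, if_neg (by omega), List.getD_eq_default]
    · exact Nat.zero_le _
    · have : σ.q = σ.nzList.length := rfl
      omega

lemma cIdx_lt_cIdx (σ : WComb) {a b : ℕ} (hab : a < b) (hbq : b ≤ σ.q) :
    σ.cIdx a < σ.cIdx b := by
  have hb1 : 1 ≤ b := by omega
  have hbm := σ.cIdx_mem hb1 hbq
  rcases Nat.eq_zero_or_pos a with ha | ha
  · have := (mem_nzList.mp hbm).1
    simp [ha]; omega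
  · have hlb : b - 1 < σ.nzList.length := by
      have : σ.q = σ.nzList.length := rfl
      omega
    have hla : a - 1 < σ.nzList.length := by omega
    rw [cIdx, cIdx, if_neg (by omega), if_neg (by omega),
      List.getD_eq_getElem _ _ hla, List.getD_eq_getElem _ _ hlb]
    exact σ.nzList_sorted.sortedLT.strictMono_get
      (show (⟨a-1, hla⟩ : Fin _) < ⟨b-1, hlb⟩ by simp [Fin.lt_def]; omega)

lemma cIdx_le_cIdx (σ : WComb) {a b : ℕ} (hab : a ≤ b) (hbq : b ≤ σ.q) :
    σ.cIdx a ≤ σ.cIdx b := by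
  rcases lt_or_eq_of_le hab with h | h
  · exact (σ.cIdx_lt_cIdx h hbq).le
  · rw [h]

lemma le_of_cIdx_le_cIdx (σ : WComb) {a b : ℕ} (haq : a ≤ σ.q)
    (h : σ.cIdx a ≤ σ.cIdx b) (hbq : b ≤ σ.q) : a ≤ b := by
  by_contra hab
  exact absurd h (not_le.mpr (σ.cIdx_lt_cIdx (by omega) haq))

lemma exists_cIdx (σ : WComb) {i : ℕ} (h : i ∈ σ.nzList) :
    ∃ k, 1 ≤ k ∧ k ≤ σ.q ∧ σ.cIdx k = i := by
  obtain ⟨n, hn, hni⟩ := List.mem_iff_getElem.mp h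
  refine ⟨n + 1, by omega, by
    have : σ.q = σ.nzList.length := rfl
    omega, ?_⟩
  rw [cIdx, if_neg (by omega), Nat.add_sub_cancel, List.getD_eq_getElem _ _ hn, hni]

lemma cIdx_q (σ : WComb) (hσ : σ.IsStable) : σ.cIdx σ.q = σ.t := by
  rcases Nat.eq_zero_or_pos σ.t with ht | ht
  · have hq : σ.q = 0 := by
      rw [q, List.length_eq_zero_iff]
      rw [nzList, ← Finset.sort_empty (· ≤ ·)]
      congr 1
      rw [Finset.eq_empty_iff_forall_notMem]
      intro i hi
      simp [Finset.mem_filter, Finset.mem_Icc] at hi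
      omega
    simp [hq, ht]
  · have hmem : σ.t ∈ σ.nzList := mem_nzList.mpr ⟨ht, le_rfl, hσ.2 ht⟩
    obtain ⟨k, hk1, hkq, hki⟩ := σ.exists_cIdx hmem
    exact le_antisymm (σ.cIdx_le_t _) (hki ▸ σ.cIdx_le_cIdx hkq le_rfl)

lemma G_subset_ghost (σ : WComb) (i : ℕ) : σ.G i ⊆ σ.ghost := by
  by_cases h : i ≤ σ.t
  · intro x hx
    exact Finset.mem_biUnion.mpr ⟨i, Finset.mem_range.mpr (by omega), hx⟩
  · rw [σ.G_beyond i (by omega)]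
    exact Finset.empty_subset _

end WComb

namespace WComb

lemma sup_id_mem (s : Finset ℕ) (h : s.sup id ≠ 0) : s.sup id ∈ s := by
  have hne : s.Nonempty := by
    rcases s.eq_empty_or_nonempty with rfl | hne
    · simp at h
    · exact hne
  obtain ⟨b, hb, he⟩ := Finset.exists_mem_eq_sup s hne id
  rw [he]; exact hb

lemma biUnion_cIdx (σ : WComb) (F : ℕ → Finset ℕ) (hF : ∀ i, σ.W i = ∅ → F i = ∅)
    {a b : ℕ} (hab : a ≤ b) (hb : b ≤ σ.q) :
    (Finset.Ioc (σ.cIdx a) (σ.cIdx b)).biUnion F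
      = (Finset.Ioc a b).biUnion (fun l => F (σ.cIdx l)) := by
  ext x
  simp only [Finset.mem_biUnion, Finset.mem_Ioc]
  constructor
  · rintro ⟨i, ⟨hi1, hi2⟩, hx⟩
    have hWi : σ.W i ≠ ∅ := by
      intro h; rw [hF i h] at hx; simp at hx
    have hit : i ≤ σ.t := le_trans hi2 (σ.cIdx_le_t b)
    obtain ⟨k, hk1, hkq, hki⟩ := σ.exists_cIdx (mem_nzList.mpr ⟨by omega, hit, hWi⟩)
    refine ⟨k, ⟨?_, ?_⟩, hki ▸ hx⟩
    · by_contra hc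
      exact absurd (hki ▸ σ.cIdx_le_cIdx (not_lt.mp hc) (le_trans hab hb))
        (not_le.mpr hi1)
    · by_contra hc
      exact absurd (hki ▸ σ.cIdx_lt_cIdx (not_le.mp hc) hkq) (not_lt.mpr hi2)
  · rintro ⟨l, ⟨hl1, hl2⟩, hx⟩
    exact ⟨σ.cIdx l, ⟨σ.cIdx_lt_cIdx hl1 (le_trans hl2 hb),
      σ.cIdx_le_cIdx hl2 hb⟩, hx⟩

lemma Ioc_telescope (f : ℕ → ℕ) {n : ℕ}
    (hmono : ∀ a b, a ≤ b → b ≤ n → f a ≤ f b) (G : ℕ → Finset ℕ) :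
    ∀ {a b : ℕ}, a ≤ b → b ≤ n →
      (Finset.Ioc a b).biUnion (fun l => (Finset.Ioc (f (l - 1)) (f l)).biUnion G)
        = (Finset.Ioc (f a) (f b)).biUnion G := by
  intro a b hab hbn
  induction b, hab using Nat.le_induction with
  | base => simp
  | succ b hab ih =>
    have h1 : Finset.Ioc a (b + 1) = insert (b + 1) (Finset.Ioc a b) := by
      ext x; simp [Finset.mem_Ioc]; omega
    have h2 : Finset.Ioc (f a) (f (b + 1))
        = Finset.Ioc (f b) (f (b + 1)) ∪ Finset.Ioc (f a) (f b) := by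
      rw [Finset.union_comm,
        Finset.Ioc_union_Ioc_eq_Ioc (hmono a b hab (by omega))
          (hmono b (b + 1) (by omega) hbn)]
    rw [h1, Finset.biUnion_insert, ih (by omega), h2, Nat.add_sub_cancel]
    ext x
    simp only [Finset.mem_biUnion, Finset.mem_union]
    aesop

lemma canon_t (σ : WComb) : σ.canon.t = σ.q := rfl

lemma canon_W (σ : WComb) {k : ℕ} (h : k ≤ σ.q) :
    σ.canon.W k = σ.W (σ.cIdx k) := if_pos h

@[simp] lemma canon_G0 (σ : WComb) : σ.canon.G 0 = σ.G 0 := rfl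

lemma canon_G (σ : WComb) {k : ℕ} (h1 : 1 ≤ k) (h2 : k ≤ σ.q) :
    σ.canon.G k = (Finset.Ioc (σ.cIdx (k - 1)) (σ.cIdx k)).biUnion σ.G := by
  show (if k = 0 then _ else if k ≤ σ.q then _ else _) = _
  rw [if_neg (by omega), if_pos h2]

lemma st_t (σ : WComb) (S : Finset ℕ) : (σ.st S).t = σ.stQ S := rfl

lemma st_W (σ : WComb) (S : Finset ℕ) {k : ℕ} (h : k ≤ σ.stQ S) :
    (σ.st S).W k = σ.W k \ σ.Jset S k := if_pos h

lemma st_G (σ : WComb) (S : Finset ℕ) {k : ℕ} (h : k ≤ σ.stQ S) :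
    (σ.st S).G k = σ.G k ∪ σ.Jset S k := if_pos h

lemma stQ_le (σ : WComb) (S : Finset ℕ) : σ.stQ S ≤ σ.t := by
  apply Finset.sup_le
  intro i hi
  simp only [Finset.mem_filter, Finset.mem_range] at hi
  exact Nat.lt_succ_iff.mp hi.1

lemma Jset_empty (σ : WComb) (S : Finset ℕ) {i : ℕ} (h : σ.W i = ∅) :
    σ.Jset S i = ∅ := by
  simp [Jset, h]

end WComb

namespace WComb

lemma canon_congr (σ' σ : WComb) (f : ℕ → ℕ)
    (hf0 : f 0 = 0)
    (hmono : ∀ a b, a < b → b ≤ σ'.t → f a < f b)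
    (hft : f σ'.t = σ.t)
    (hW : ∀ k, k ≤ σ'.t → σ'.W k = σ.W (f k))
    (hsurj : ∀ i, 1 ≤ i → i ≤ σ.t → σ.W i ≠ ∅ → ∃ k, 1 ≤ k ∧ k ≤ σ'.t ∧ f k = i)
    (hG0 : σ'.G 0 = σ.G 0)
    (hG : ∀ k, 1 ≤ k → k ≤ σ'.t → σ'.G k = (Finset.Ioc (f (k - 1)) (f k)).biUnion σ.G) :
    σ'.canon = σ.canon := by
  have hmono' : ∀ a b, a ≤ b → b ≤ σ'.t → f a ≤ f b := by
    intro a b hab hb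
    rcases lt_or_eq_of_le hab with h | h
    · exact (hmono a b h hb).le
    · rw [h]
  -- membership characterization
  have hel : ∀ k ∈ σ'.nzList, 1 ≤ k ∧ k ≤ σ'.t := by
    intro k hk
    exact ⟨(mem_nzList.mp hk).1, (mem_nzList.mp hk).2.1⟩
  have hmem : ∀ i, i ∈ σ.nzList ↔ i ∈ σ'.nzList.map f := by
    intro i
    rw [List.mem_map, mem_nzList]
    constructor
    · rintro ⟨hi1, hi2, hi3⟩
      obtain ⟨k, hk1, hk2, hk3⟩ := hsurj i hi1 hi2 hi3
      exact ⟨k, mem_nzList.mpr ⟨hk1, hk2, by rw [hW k hk2, hk3]; exact hi3⟩, hk3⟩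
    · rintro ⟨k, hk, rfl⟩
      obtain ⟨hk1, hk2, hk3⟩ := mem_nzList.mp hk
      refine ⟨?_, hft ▸ hmono' k σ'.t hk2 le_rfl, ?_⟩
      · have := hmono 0 k (by omega) hk2
        omega
      · rw [← hW k hk2]; exact hk3
  -- sortedness of the mapped list
  have hsorted : (σ'.nzList.map f).Pairwise (· < ·) := by
    rw [List.pairwise_map]
    exact (σ'.nzList_sorted.imp_of_mem (fun {a b} ha hb hab =>
      hmono a b hab (hel b hb).2))
  have hnd1 : σ.nzList.Nodup := σ.nzList_sorted.imp (fun h => ne_of_lt h)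
  have hnd2 : (σ'.nzList.map f).Nodup := hsorted.imp (fun h => ne_of_lt h)
  haveI : IsAntisymm ℕ (· < ·) := ⟨fun a b h1 h2 => absurd h2 (not_lt.mpr h1.le)⟩
  have hlist : σ.nzList = σ'.nzList.map f :=
    List.Perm.eq_of_pairwise (fun a b _ _ h1 h2 => absurd h2 (not_lt.mpr h1.le))
      σ.nzList_sorted hsorted ((List.perm_ext_iff_of_nodup hnd1 hnd2).mpr hmem)
  have hq : σ.q = σ'.q := by
    rw [q, q, hlist, List.length_map]
  have hc : ∀ m, σ.cIdx m = f (σ'.cIdx m) := by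
    intro m
    rcases Nat.eq_zero_or_pos m with rfl | hm
    · simp [hf0]
    rw [cIdx, cIdx, if_neg (by omega), if_neg (by omega), hlist]
    by_cases hlt : m - 1 < σ'.nzList.length
    · rw [List.getD_eq_getElem _ _ (by simpa using hlt),
        List.getD_eq_getElem _ _ hlt, List.getElem_map]
    · rw [List.getD_eq_default _ _ (by simpa using hlt),
        List.getD_eq_default _ _ (by omega), hf0]
  -- the q' bound for cIdx: σ'.cIdx k ≤ σ'.t always
  apply ext'
  · show σ'.q = σ.q
    exact hq.symm
  · funext k
    show (if k ≤ σ'.q then σ'.W (σ'.cIdx k) else ∅)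
        = (if k ≤ σ.q then σ.W (σ.cIdx k) else ∅)
    rw [hq]
    by_cases hk : k ≤ σ'.q
    · rw [if_pos hk, if_pos hk, hW _ (σ'.cIdx_le_t k), hc]
    · rw [if_neg hk, if_neg hk]
  · funext k
    show (if k = 0 then σ'.G 0 else if k ≤ σ'.q then _ else ∅)
        = (if k = 0 then σ.G 0 else if k ≤ σ.q then _ else ∅)
    rcases Nat.eq_zero_or_pos k with rfl | hk1
    · simpa using hG0
    rw [if_neg (show ¬ k = 0 by omega), if_neg (show ¬ k = 0 by omega), hq]
    by_cases hk : k ≤ σ'.q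
    · rw [if_pos hk, if_pos hk]
      have hble : σ'.cIdx k ≤ σ'.t := σ'.cIdx_le_t k
      have hab : σ'.cIdx (k - 1) ≤ σ'.cIdx k :=
        σ'.cIdx_le_cIdx (by omega) hk
      rw [Finset.biUnion_congr rfl (fun l hl => hG l
          (by have := (Finset.mem_Ioc.mp hl).1; omega)
          (le_trans (Finset.mem_Ioc.mp hl).2 hble)),
        Ioc_telescope f hmono' σ.G hab hble, ← hc, ← hc]
    · rw [if_neg hk, if_neg hk]

end WComb

namespace WComb

lemma range_succ_eq_insert (n : ℕ) :
    Finset.range (n + 1) = insert 0 (Finset.Ioc 0 n) := by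
  ext x; simp [Finset.mem_Ioc, Finset.mem_range, Finset.mem_insert]

lemma cIdx_mono (σ : WComb) : ∀ a b, a ≤ b → b ≤ σ.q → σ.cIdx a ≤ σ.cIdx b :=
  fun _ _ hab hb => σ.cIdx_le_cIdx hab hb

lemma ghost_canon (σ : WComb) (hσ : σ.IsStable) : σ.canon.ghost = σ.ghost := by
  rw [ghost, ghost, canon_t, range_succ_eq_insert, range_succ_eq_insert,
    Finset.biUnion_insert, Finset.biUnion_insert, σ.canon_G0]
  congr 1
  rw [Finset.biUnion_congr rfl (fun k hk => σ.canon_G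
      (by have := (Finset.mem_Ioc.mp hk).1; omega) (Finset.mem_Ioc.mp hk).2),
    Ioc_telescope σ.cIdx σ.cIdx_mono σ.G (Nat.zero_le _) le_rfl,
    cIdx_zero, σ.cIdx_q hσ]

lemma le_stQ (σ : WComb) (S : Finset ℕ) {i : ℕ} (hi : i ≤ σ.t)
    (h : ¬ (σ.W i ∪ σ.G i ⊆ S ∪ σ.ghost)) : i ≤ σ.stQ S := by
  have : i ∈ (Finset.range (σ.t + 1)).filter
      (fun i => ¬ (σ.W i ∪ σ.G i ⊆ S ∪ σ.ghost)) :=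
    Finset.mem_filter.mpr ⟨Finset.mem_range.mpr (by omega), h⟩
  exact Finset.le_sup (f := id) this

lemma stQ_spec (σ : WComb) (S : Finset ℕ) (h : σ.stQ S ≠ 0) :
    ¬ (σ.W (σ.stQ S) ∪ σ.G (σ.stQ S) ⊆ S ∪ σ.ghost) := by
  have hmem := sup_id_mem ((Finset.range (σ.t + 1)).filter
      (fun i => ¬ (σ.W i ∪ σ.G i ⊆ S ∪ σ.ghost))) h
  exact (Finset.mem_filter.mp hmem).2

lemma subset_iff_of_le (σ : WComb) (S : Finset ℕ) {i : ℕ} :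
    (σ.W i ∪ σ.G i ⊆ S ∪ σ.ghost) ↔ σ.W i ⊆ S ∪ σ.ghost := by
  rw [Finset.union_subset_iff]
  exact ⟨fun h => h.1, fun h =>
    ⟨h, (σ.G_subset_ghost i).trans Finset.subset_union_right⟩⟩

lemma stQ_canon (σ : WComb) (hσ : σ.IsStable) (S : Finset ℕ) :
    σ.cIdx (σ.canon.stQ S) = σ.stQ S := by
  have hgh := σ.ghost_canon hσ
  have hQ'le : σ.canon.stQ S ≤ σ.q := σ.canon.stQ_le S
  apply le_antisymm
  · rcases eq_or_ne (σ.canon.stQ S) 0 with h0 | h0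
    · rw [h0, cIdx_zero]; exact Nat.zero_le _
    · have hspec := σ.canon.stQ_spec S h0
      rw [σ.canon.subset_iff_of_le, hgh, σ.canon_W hQ'le] at hspec
      apply σ.le_stQ S (σ.cIdx_le_t _)
      rw [σ.subset_iff_of_le]
      exact hspec
  · rcases eq_or_ne (σ.stQ S) 0 with h0 | h0
    · rw [h0]; exact Nat.zero_le _
    · have hspec := σ.stQ_spec S h0
      rw [σ.subset_iff_of_le] at hspec
      have hWne : σ.W (σ.stQ S) ≠ ∅ := by
        intro h; rw [h] at hspec; exact hspec (Finset.empty_subset _)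
      obtain ⟨k, hk1, hkq, hki⟩ := σ.exists_cIdx (mem_nzList.mpr
        ⟨by omega, σ.stQ_le S, hWne⟩)
      have hkQ' : k ≤ σ.canon.stQ S := by
        apply σ.canon.le_stQ S (by rw [canon_t]; exact hkq)
        rw [σ.canon.subset_iff_of_le, hgh, σ.canon_W hkq, hki]
        exact hspec
      exact hki ▸ σ.cIdx_le_cIdx hkQ' hQ'le

lemma Jset_canon (σ : WComb) (hσ : σ.IsStable) (S : Finset ℕ) {k : ℕ}
    (hk : k ≤ σ.canon.stQ S) :
    σ.canon.Jset S k = σ.Jset S (σ.cIdx k) := by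
  have hQ'le : σ.canon.stQ S ≤ σ.q := σ.canon.stQ_le S
  have h1 : (Finset.Ioc (σ.cIdx k) (σ.stQ S)).biUnion σ.W
      = (Finset.Ioc k (σ.canon.stQ S)).biUnion σ.canon.W := by
    rw [← σ.stQ_canon hσ S, σ.biUnion_cIdx σ.W (fun _ h => h) hk hQ'le]
    exact (Finset.biUnion_congr rfl (fun l hl =>
      σ.canon_W (le_trans (Finset.mem_Ioc.mp hl).2 hQ'le))).symm
  rw [Jset, Jset, σ.ghost_canon hσ, σ.canon_W (le_trans hk hQ'le), ← h1]

end WComb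

theorem canon_st_canon' (σ : WComb) (hσ : σ.IsStable) (S : Finset ℕ) :
    (σ.st S).canon = (σ.canon.st S).canon := by
  open WComb in
  have hQ'le : σ.canon.stQ S ≤ σ.q := σ.canon.stQ_le S
  have hstq := σ.stQ_canon hσ S
  have hcQ : ∀ {k : ℕ}, k ≤ σ.canon.stQ S → σ.cIdx k ≤ σ.stQ S := by
    intro k hk
    rw [← hstq]
    exact σ.cIdx_le_cIdx hk hQ'le
  refine (WComb.canon_congr (σ.canon.st S) (σ.st S) σ.cIdx rfl ?_ ?_ ?_ ?_ ?_ ?_).symm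
  · -- strict monotonicity
    intro a b hab hb
    exact σ.cIdx_lt_cIdx hab (le_trans hb hQ'le)
  · -- f of top
    exact hstq
  · -- W columns
    intro k hk
    rw [WComb.st_W _ _ hk, WComb.st_W _ _ (hcQ hk), σ.canon_W (le_trans hk hQ'le),
      σ.Jset_canon hσ S hk]
  · -- surjectivity on nonempty columns
    intro i hi1 hi2 hi3
    have hWne : σ.W i ≠ ∅ := by
      intro h
      apply hi3
      rw [WComb.st_W _ _ hi2, h]
      simp
    obtain ⟨k, hk1, hkq, hki⟩ := σ.exists_cIdx (WComb.mem_nzList.mpr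
      ⟨hi1, le_trans hi2 (σ.stQ_le S), hWne⟩)
    refine ⟨k, hk1, ?_, hki⟩
    apply σ.le_of_cIdx_le_cIdx hkq _ hQ'le
    rw [hki, hstq]
    exact hi2
  · -- G 0
    rw [WComb.st_G _ _ (Nat.zero_le _), WComb.st_G _ _ (Nat.zero_le _),
      WComb.canon_G0, σ.Jset_canon hσ S (Nat.zero_le _), WComb.cIdx_zero]
  · -- G columns
    intro k hk1 hk2
    have hble : σ.cIdx k ≤ σ.stQ S := hcQ hk2
    rw [WComb.st_G _ _ hk2, σ.canon_G hk1 (le_trans hk2 hQ'le), σ.Jset_canon hσ S hk2]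
    have h2 : (Finset.Ioc (σ.cIdx (k - 1)) (σ.cIdx k)).biUnion (σ.st S).G
        = (Finset.Ioc (σ.cIdx (k - 1)) (σ.cIdx k)).biUnion
            (fun i => σ.G i ∪ σ.Jset S i) := by
      refine Finset.biUnion_congr rfl (fun i hi => ?_)
      exact WComb.st_G _ _ (le_trans (Finset.mem_Ioc.mp hi).2 hble)
    have h3 : (Finset.Ioc (σ.cIdx (k - 1)) (σ.cIdx k)).biUnion (σ.Jset S)
        = σ.Jset S (σ.cIdx k) := by
      rw [σ.biUnion_cIdx (σ.Jset S) (fun i h => σ.Jset_empty S h)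
        (Nat.sub_le k 1) (le_trans hk2 hQ'le)]
      have : Finset.Ioc (k - 1) k = {k} := by
        ext x; simp [Finset.mem_Ioc]; omega
      rw [this, Finset.singleton_biUnion]
    rw [h2]
    ext x
    simp only [Finset.mem_biUnion, Finset.mem_union, ← h3, Finset.mem_biUnion]
    aesop

/-- for a stable witness prestructure `σ` and `S ⊆ A(σ)`,
`C(st_S(σ)) = C(st_S(C(σ)))`. -/
theorem canon_st_canon (σ : WComb) (hσ : σ.IsStable) (S : Finset ℕ)
    (hS : S ⊆ σ.active) :
    (σ.st S).canon = (σ.canon.st S).canon := by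
  exact canon_st_canon' σ hσ S
end

section
/- Let f(m_0,...,m_n) be defined by f(m_0,...,m_{n-1},0) = f(m_0,...,m_{n-1}), f() = 1, and for m_0,...,m_n ≥ 1, f(m_0,...,m_n) = Σ_{∅ ≠ S ⊆ [n]} f(m_0^S,...,m_n^S) where m_k^S = m_k − 1 if k ∈ S and m_k otherwise. Then f is symmetric: f(m_0,...,m_n) = f(m_{π(0)},...,m_{π(n)}) for every permutation π of {0,...,n}. -/
/-- Fuelled auxiliary recursion for the number of top-dimensional simplices of
the immediate snapshot complex `P(m₀, …, mₙ)`. -/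
def fAux : ℕ → List ℕ → ℕ
  | 0, _ => 1
  | _, [] => 1
  | fuel + 1, l =>
    if 0 ∈ l then fAux fuel (l.erase 0)
    else
      ∑ S ∈ (Finset.range l.length).powerset.erase ∅,
        fAux fuel (l.mapIdx fun i a => if i ∈ S then a - 1 else a)

/-- `f(m₀, …, mₙ)`, the number of top-dimensional simplices of `P(m₀, …, mₙ)`. -/
def fList (l : List ℕ) : ℕ := fAux (l.sum + l.length + 1) l

lemma fAux_nil (F : ℕ) : fAux F [] = 1 := by cases F <;> rfl

lemma fAux_succ (F : ℕ) (a : ℕ) (t : List ℕ) :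
    fAux (F + 1) (a :: t) =
      if 0 ∈ a :: t then fAux F ((a :: t).erase 0)
      else ∑ S ∈ (Finset.range (a :: t).length).powerset.erase ∅,
          fAux F ((a :: t).mapIdx fun i b => if i ∈ S then b - 1 else b) := rfl

lemma dec_eq_ofFn (l : List ℕ) (S : Finset ℕ) :
    (l.mapIdx fun i a => if i ∈ S then a - 1 else a)
      = List.ofFn (fun i : Fin l.length => if (i : ℕ) ∈ S then l.get i - 1 else l.get i) :=
  List.mapIdx_eq_ofFn l _

lemma sum_get (l : List ℕ) : ∑ i : Fin l.length, l.get i = l.sum := by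
  conv_rhs => rw [← List.ofFn_get l, List.sum_ofFn]

lemma dec_length (l : List ℕ) (S : Finset ℕ) :
    (l.mapIdx fun i a => if i ∈ S then a - 1 else a).length = l.length := by
  rw [dec_eq_ofFn, List.length_ofFn]

lemma dec_sum_le (l : List ℕ) (S : Finset ℕ) :
    (l.mapIdx fun i a => if i ∈ S then a - 1 else a).sum ≤ l.sum := by
  rw [dec_eq_ofFn, List.sum_ofFn, ← sum_get l]
  exact Finset.sum_le_sum fun i _ => by split <;> omega

lemma dec_sum_lt {l : List ℕ} {S : Finset ℕ} (h0 : 0 ∉ l) (hS : S.Nonempty)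
    (hSr : S ⊆ Finset.range l.length) :
    (l.mapIdx fun i a => if i ∈ S then a - 1 else a).sum < l.sum := by
  rw [dec_eq_ofFn, List.sum_ofFn, ← sum_get l]
  obtain ⟨k, hk⟩ := hS
  have hkn : k < l.length := Finset.mem_range.1 (hSr hk)
  apply Finset.sum_lt_sum (fun i _ => by split <;> omega)
  refine ⟨⟨k, hkn⟩, Finset.mem_univ _, ?_⟩
  have hmem : l.get ⟨k, hkn⟩ ∈ l := List.get_mem l ⟨k, hkn⟩
  have hpos : 1 ≤ l.get ⟨k, hkn⟩ := by
    rcases Nat.eq_zero_or_pos (l.get ⟨k, hkn⟩) with h | h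
    · exact absurd (h ▸ hmem) h0
    · exact h
  simp only [hk, if_pos]
  omega

lemma erase_zero_sum {l : List ℕ} (h : 0 ∈ l) :
    (l.erase 0).sum = l.sum ∧ (l.erase 0).length + 1 = l.length := by
  have hp := List.perm_cons_erase h
  constructor
  · have := hp.sum_eq; simpa using this.symm
  · have := hp.length_eq; simpa using this.symm

lemma fAux_fuel : ∀ F F' (l : List ℕ), l.sum + l.length ≤ F → l.sum + l.length ≤ F' →
    fAux F l = fAux F' l := by
  intro F
  induction F with
  | zero =>
    intro F' l h _
    have : l = [] := by cases l with
      | nil => rfl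
      | cons a t => simp at h
    subst this
    rw [fAux_nil, fAux_nil]
  | succ F ih =>
    intro F' l hF hF'
    cases l with
    | nil => rw [fAux_nil, fAux_nil]
    | cons a t =>
      obtain ⟨F'', rfl⟩ : ∃ F'', F' = F'' + 1 := by
        cases F' with
        | zero => simp at hF'
        | succ n => exact ⟨n, rfl⟩
      rw [fAux_succ, fAux_succ]
      by_cases h0 : 0 ∈ a :: t
      · simp only [if_pos h0]
        obtain ⟨hs, hl⟩ := erase_zero_sum h0
        apply ih <;> omega
      · simp only [if_neg h0]
        apply Finset.sum_congr rfl
        intro S hS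
        have hSne : S.Nonempty := Finset.nonempty_iff_ne_empty.2 (Finset.mem_erase.1 hS).1
        have hSr : S ⊆ Finset.range (a :: t).length :=
          Finset.mem_powerset.1 (Finset.mem_erase.1 hS).2
        have h1 := dec_sum_lt h0 hSne hSr
        have h2 := dec_length (a :: t) S
        apply ih <;> omega

lemma fList_eq_fAux {l : List ℕ} {F : ℕ} (h : l.sum + l.length ≤ F) : fList l = fAux F l :=
  fAux_fuel _ _ _ (by omega) h

lemma fList_erase {l : List ℕ} (h : 0 ∈ l) : fList l = fList (l.erase 0) := by
  cases l with
  | nil => simp at h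
  | cons a t =>
    obtain ⟨hs, hl⟩ := erase_zero_sum h
    rw [fList, fAux_succ, if_pos h]
    rw [show fList ((a :: t).erase 0) = fAux ((a :: t).sum + (a :: t).length) ((a :: t).erase 0)
      from fList_eq_fAux (by omega)]

lemma fList_rec {l : List ℕ} (hne : l ≠ []) (h0 : 0 ∉ l) :
    fList l = ∑ S ∈ (Finset.range l.length).powerset.erase ∅,
      fList (l.mapIdx fun i a => if i ∈ S then a - 1 else a) := by
  cases l with
  | nil => exact absurd rfl hne
  | cons a t =>
    rw [fList, fAux_succ, if_neg h0]
    apply Finset.sum_congr rfl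
    intro S _
    have h1 := dec_sum_le (a :: t) S
    have h2 := dec_length (a :: t) S
    exact (fList_eq_fAux (by omega)).symm

lemma exists_comp_perm {n : ℕ} (f g : Fin n → ℕ) (p : (List.ofFn f).Perm (List.ofFn g)) :
    ∃ σ : Equiv.Perm (Fin n), g = f ∘ σ := by
  have h1 : List.ofFn (f ∘ Tuple.sort f) = List.ofFn (g ∘ Tuple.sort g) :=
    List.Perm.eq_of_sortedLE
      (List.sortedLE_ofFn_iff.2 (Tuple.monotone_sort f))
      (List.sortedLE_ofFn_iff.2 (Tuple.monotone_sort g))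
      (((Tuple.sort f).ofFn_comp_perm f).trans (p.trans ((Tuple.sort g).ofFn_comp_perm g).symm))
  have h2 : f ∘ Tuple.sort f = g ∘ Tuple.sort g := List.ofFn_injective h1
  refine ⟨Tuple.sort f * (Tuple.sort g)⁻¹, funext fun x => ?_⟩
  have := congrFun h2 ((Tuple.sort g)⁻¹ x)
  simp only [Function.comp_apply] at this ⊢
  simp only [Equiv.Perm.mul_apply]
  rw [this]
  simp

lemma ofFn_get_cast {l' : List ℕ} {n : ℕ} (h : n = l'.length) :
    List.ofFn (fun i : Fin n => l'.get (Fin.cast h i)) = l' := by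
  subst h; exact List.ofFn_get l'

lemma ofFn_comp_cast {m n : ℕ} (h : m = n) (f : Fin n → ℕ) :
    List.ofFn (fun i : Fin m => f (Fin.cast h i)) = List.ofFn f := by
  subst h; rfl

lemma sum_powerset_range_eq {M : Type*} [AddCommMonoid M] (n : ℕ) (g : Finset ℕ → M) :
    ∑ S ∈ (Finset.range n).powerset.erase ∅, g S
      = ∑ T ∈ ((Finset.univ : Finset (Fin n)).powerset.erase ∅), g (T.image Fin.val) := by
  apply Finset.sum_nbij' (i := fun S => Finset.univ.filter fun i : Fin n => (i : ℕ) ∈ S)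
    (j := fun T => T.image Fin.val)
  · intro S hS
    obtain ⟨hne, hsub⟩ := Finset.mem_erase.1 hS
    have hsub' := Finset.mem_powerset.1 hsub
    rw [Finset.mem_erase, Finset.mem_powerset]
    refine ⟨?_, Finset.subset_univ _⟩
    obtain ⟨k, hk⟩ := Finset.nonempty_iff_ne_empty.2 hne
    have hkn : k < n := Finset.mem_range.1 (hsub' hk)
    exact Finset.ne_empty_of_mem (by simp [hk] : (⟨k, hkn⟩ : Fin n) ∈ _)
  · intro T hT
    obtain ⟨hne, _⟩ := Finset.mem_erase.1 hT
    rw [Finset.mem_erase, Finset.mem_powerset]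
    constructor
    · obtain ⟨i, hi⟩ := Finset.nonempty_iff_ne_empty.2 hne
      exact Finset.ne_empty_of_mem (Finset.mem_image_of_mem _ hi)
    · intro k hk
      obtain ⟨i, _, rfl⟩ := Finset.mem_image.1 hk
      exact Finset.mem_range.2 i.isLt
  · intro S hS
    obtain ⟨_, hsub⟩ := Finset.mem_erase.1 hS
    have hsub' := Finset.mem_powerset.1 hsub
    ext k
    simp only [Finset.mem_image, Finset.mem_filter, Finset.mem_univ, true_and]
    constructor
    · rintro ⟨i, hi, rfl⟩; exact hi
    · intro hk
      exact ⟨⟨k, Finset.mem_range.1 (hsub' hk)⟩, hk, rfl⟩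
  · intro T _
    ext i
    simp only [Finset.mem_filter, Finset.mem_univ, true_and, Finset.mem_image]
    constructor
    · rintro ⟨j, hj, hji⟩
      rwa [show j = i from Fin.val_injective hji] at hj
    · intro hi; exact ⟨i, hi, rfl⟩
  · intro S hS
    obtain ⟨_, hsub⟩ := Finset.mem_erase.1 hS
    have hsub' := Finset.mem_powerset.1 hsub
    congr 1
    ext k
    simp only [Finset.mem_image, Finset.mem_filter, Finset.mem_univ, true_and]
    constructor
    · intro hk
      exact ⟨⟨k, Finset.mem_range.1 (hsub' hk)⟩, hk, rfl⟩
    · rintro ⟨i, hi, rfl⟩; exact hi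

lemma key_sum {l l' : List ℕ} (p : l.Perm l') (h0 : 0 ∉ l) (G : List ℕ → ℕ)
    (H : ∀ a b : List ℕ, a.Perm b → a.sum + a.length < l.sum + l.length → G a = G b) :
    ∑ S ∈ (Finset.range l.length).powerset.erase ∅,
        G (l.mapIdx fun i a => if i ∈ S then a - 1 else a)
      = ∑ S ∈ (Finset.range l'.length).powerset.erase ∅,
        G (l'.mapIdx fun i a => if i ∈ S then a - 1 else a) := by
  have hlen : l.length = l'.length := p.length_eq
  set n := l.length with hn
  -- functions
  set f : Fin n → ℕ := l.get with hf
  set g : Fin n → ℕ := fun i => l'.get (Fin.cast hlen i) with hg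
  have hofg : List.ofFn g = l' := ofFn_get_cast hlen
  have hoff : List.ofFn f = l := List.ofFn_get l
  have p' : (List.ofFn f).Perm (List.ofFn g) := by rw [hofg, hoff]; exact p
  obtain ⟨σ, hσ⟩ := exists_comp_perm f g p'
  rw [sum_powerset_range_eq n, sum_powerset_range_eq l'.length]
  -- reindex
  apply Finset.sum_nbij' (i := fun T : Finset (Fin n) => T.image fun i => Fin.cast hlen (σ⁻¹ i))
    (j := fun T : Finset (Fin l'.length) => T.image fun j => σ (Fin.cast hlen.symm j))
  · intro T hT
    obtain ⟨hne, _⟩ := Finset.mem_erase.1 hT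
    rw [Finset.mem_erase, Finset.mem_powerset]
    refine ⟨?_, Finset.subset_univ _⟩
    obtain ⟨i, hi⟩ := Finset.nonempty_iff_ne_empty.2 hne
    exact Finset.ne_empty_of_mem (Finset.mem_image_of_mem _ hi)
  · intro T hT
    obtain ⟨hne, _⟩ := Finset.mem_erase.1 hT
    rw [Finset.mem_erase, Finset.mem_powerset]
    refine ⟨?_, Finset.subset_univ _⟩
    obtain ⟨i, hi⟩ := Finset.nonempty_iff_ne_empty.2 hne
    exact Finset.ne_empty_of_mem (Finset.mem_image_of_mem _ hi)
  · intro T _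
    rw [Finset.image_image]
    have : ((fun j => σ (Fin.cast hlen.symm j)) ∘ fun i => Fin.cast hlen (σ⁻¹ i)) = id := by
      funext i; simp
    rw [this, Finset.image_id]
  · intro T _
    rw [Finset.image_image]
    have : ((fun i => Fin.cast hlen (σ⁻¹ i)) ∘ fun j => σ (Fin.cast hlen.symm j)) = id := by
      funext j; simp
    rw [this, Finset.image_id]
  · intro T hT
    obtain ⟨hne, _⟩ := Finset.mem_erase.1 hT
    obtain ⟨i0, hi0⟩ := Finset.nonempty_iff_ne_empty.2 hne
    -- the two decremented lists
    set dfun : Fin n → ℕ := fun i => if i ∈ T then f i - 1 else f i with hdfun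
    have hdl : (l.mapIdx fun i a => if i ∈ T.image Fin.val then a - 1 else a)
        = List.ofFn dfun := by
      rw [dec_eq_ofFn]
      congr 1
      funext i
      have : ((i : ℕ) ∈ T.image Fin.val) ↔ i ∈ T := by
        simp only [Finset.mem_image]
        constructor
        · rintro ⟨j, hj, hji⟩; rwa [show j = i from Fin.val_injective hji] at hj
        · intro hi; exact ⟨i, hi, rfl⟩
      simp only [this, hf]
      rfl
    have hdl' : (l'.mapIdx fun i a =>
          if i ∈ (T.image fun i => Fin.cast hlen (σ⁻¹ i)).image Fin.val then a - 1 else a)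
        = List.ofFn (dfun ∘ σ) := by
      rw [dec_eq_ofFn, ← ofFn_comp_cast hlen]
      congr 1
      funext i
      have hmem : (((Fin.cast hlen i : Fin l'.length) : ℕ)
            ∈ (T.image fun i => Fin.cast hlen (σ⁻¹ i)).image Fin.val) ↔ σ i ∈ T := by
        simp only [Finset.mem_image]
        constructor
        · rintro ⟨j, ⟨k, hk, rfl⟩, hji⟩
          have : Fin.cast hlen (σ⁻¹ k) = Fin.cast hlen i := Fin.val_injective hji
          have hik : σ⁻¹ k = i := by
            have := congrArg (Fin.cast hlen.symm) this
            simpa using this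
          rwa [← hik, ← Equiv.Perm.mul_apply, mul_inv_cancel, Equiv.Perm.one_apply]
        · intro hi
          exact ⟨Fin.cast hlen (σ⁻¹ (σ i)), ⟨σ i, hi, rfl⟩, by simp⟩
      simp only [hmem, Function.comp_apply, hdfun]
      rw [show l'.get (Fin.cast hlen i) = f (σ i) from congrFun hσ i]
    rw [hdl, hdl']
    apply H
    · exact (σ.ofFn_comp_perm dfun).symm
    · -- measure bound
      have hlen2 : (List.ofFn dfun).length = n := List.length_ofFn
      have hsum : (List.ofFn dfun).sum < l.sum := by
        rw [List.sum_ofFn, ← sum_get l]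
        apply Finset.sum_lt_sum (fun i _ => by simp only [hdfun, hf]; split <;> omega)
        refine ⟨i0, Finset.mem_univ _, ?_⟩
        have hmem : l.get i0 ∈ l := by
          have := List.get_mem l ⟨i0.1, i0.2⟩
          simp only [Fin.eta] at this
          exact this
        have hpos : 1 ≤ l.get i0 := by
          rcases Nat.eq_zero_or_pos (l.get i0) with h | h
          · exact absurd (h ▸ hmem) h0
          · exact h
        simp only [hdfun, hf, if_pos hi0]
        omega
      omega

lemma fList_perm : ∀ m (l l' : List ℕ), l.sum + l.length ≤ m → l.Perm l' →
    fList l = fList l' := by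
  intro m
  induction m with
  | zero =>
    intro l l' h p
    have hl : l = [] := by cases l with
      | nil => rfl
      | cons a t => simp at h
    subst hl
    rw [p.symm.eq_nil]
  | succ m ih =>
    intro l l' hm p
    by_cases hnil : l = []
    · subst hnil; rw [p.symm.eq_nil]
    · by_cases h0 : 0 ∈ l
      · have h0' : 0 ∈ l' := p.mem_iff.1 h0
        rw [fList_erase h0, fList_erase h0']
        obtain ⟨hs, hl⟩ := erase_zero_sum h0
        exact ih _ _ (by omega) (p.erase 0)
      · have h0' : 0 ∉ l' := fun h => h0 (p.mem_iff.2 h)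
        have hnil' : l' ≠ [] := fun h => hnil (List.Perm.eq_nil (h ▸ p))
        rw [fList_rec hnil h0, fList_rec hnil' h0']
        exact key_sum p h0 fList fun a b pa hb => ih a b (by omega) pa

/-- `f` satisfies `f() = 1`, `f(m₀,…,m_{n-1},0) = f(m₀,…,m_{n-1})`,
and for `m₀,…,mₙ ≥ 1` the recursion
`f(m₀,…,mₙ) = Σ_{∅ ≠ S ⊆ [n]} f(m₀^S,…,mₙ^S)` where `m_k^S = m_k - 1` for
`k ∈ S` and `m_k` otherwise; moreover `f` is symmetric under every permutation
of its arguments. -/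
theorem fList_recursion_and_symmetric :
    fList [] = 1 ∧
    (∀ l : List ℕ, fList (l ++ [0]) = fList l) ∧
    (∀ l : List ℕ, l ≠ [] → (∀ x ∈ l, 1 ≤ x) →
      fList l = ∑ S ∈ (Finset.range l.length).powerset.erase ∅,
        fList (l.mapIdx fun i a => if i ∈ S then a - 1 else a)) ∧
    (∀ l l' : List ℕ, l.Perm l' → fList l = fList l') := by
  refine ⟨rfl, ?_, ?_, ?_⟩
  · intro l
    have h0 : 0 ∈ l ++ [0] := by simp
    rw [fList_erase h0]
    have hperm : ((l ++ [0]).erase 0).Perm l := by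
      have h1 : (l ++ [0]).Perm (0 :: l) := List.perm_append_singleton 0 l
      have h2 := h1.erase 0
      simpa using h2
    exact fList_perm _ _ _ le_rfl hperm
  · intro l hne hall
    have h0 : 0 ∉ l := fun h => by have := hall 0 h; omega
    exact fList_rec hne h0
  · intro l l' p
    exact fList_perm _ l l' le_rfl p
end
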